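/- Let ψ be a strictly concave increasing function on [0,∞) with ψ(0)=ψ(0⁺)=0 and ψ(∞)=∞, and on I=[0,1] let E=Λ_{1,ψ'}∩L^∞ be equipped with the norm ‖x‖_E=‖x‖_{Λ_{1,ψ'}}+‖x‖_{L^∞}. Then the function x(t)=(1−t)χ_[0,1](t) is an LLUKM point of E, but x is not a point of order continuity in E. -/

import Mathlib

open MeasureTheory Filter Topology Set
open scoped ENNReal

noncomputable section

/-- Lebesgue measure restricted to the interval `I = [0, α)`, where `α : ℝ≥0∞`. -/
def muI (α : ℝ≥0∞) : Measure ℝ :=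
  volume.restrict {s : ℝ | 0 ≤ s ∧ ENNReal.ofReal s < α}

/-- The distribution function `d_x(λ) = μ{s ∈ I : |x(s)| > λ}`. -/
def distr (α : ℝ≥0∞) (x : ℝ → ℝ) (lam : ℝ) : ℝ≥0∞ :=
  muI α {s : ℝ | lam < |x s|}

/-- The decreasing rearrangement `x*(t) = inf{λ > 0 : d_x(λ) ≤ t}`. -/
def rearr (α : ℝ≥0∞) (x : ℝ → ℝ) (t : ℝ) : ℝ :=
  sInf {lam : ℝ | 0 < lam ∧ distr α x lam ≤ ENNReal.ofReal t}

/-- The maximal function `x**(t) = (1/t) ∫₀ᵗ x*(s) ds`. -/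
def maxf (α : ℝ≥0∞) (x : ℝ → ℝ) (t : ℝ) : ℝ :=
  (∫ s in Set.Ioc (0 : ℝ) t, rearr α x s) / t

/-- The Hardy–Littlewood–Pólya relation `x ≺ y`, i.e. `x**(t) ≤ y**(t)` for all `t > 0`. -/
def HLP (α : ℝ≥0∞) (x y : ℝ → ℝ) : Prop :=
  ∀ t : ℝ, 0 < t → maxf α x t ≤ maxf α y t

/-- `x*(∞) = 0`: automatic when `α ≠ ∞`, and `lim_{t→∞} x*(t) = 0` when `α = ∞`. -/
def rearrInftyZero (α : ℝ≥0∞) (x : ℝ → ℝ) : Prop :=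
  α = ∞ → Tendsto (rearr α x) atTop (𝓝 0)

/-- A symmetric Banach function space on `[0, α)` with the Fatou property. -/
structure SymmetricBFS (α : ℝ≥0∞) where
  /-- membership in the space `E` -/
  Mem : (ℝ → ℝ) → Prop
  /-- the norm of `E` -/
  N : (ℝ → ℝ) → ℝ
  mem_aemeasurable : ∀ ⦃x⦄, Mem x → AEMeasurable x (muI α)
  zero_mem : Mem 0
  add_mem : ∀ ⦃x y⦄, Mem x → Mem y → Mem (x + y)
  smul_mem : ∀ (c : ℝ) ⦃x⦄, Mem x → Mem (c • x)
  norm_nonneg' : ∀ x, 0 ≤ N x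
  norm_zero' : N 0 = 0
  norm_add_le : ∀ x y, N (x + y) ≤ N x + N y
  norm_smul' : ∀ (c : ℝ) (x : ℝ → ℝ), N (c • x) = |c| * N x
  norm_eq_zero_iff : ∀ ⦃x⦄, Mem x → (N x = 0 ↔ (∀ᵐ s ∂(muI α), x s = 0))
  /-- the ideal (Banach function space) property -/
  ideal : ∀ ⦃x y⦄, AEMeasurable x (muI α) → Mem y →
    (∀ᵐ s ∂(muI α), |x s| ≤ |y s|) → Mem x ∧ N x ≤ N y
  /-- there is a strictly positive element -/
  exists_strictPos : ∃ x, Mem x ∧ ∀ᵐ s ∂(muI α), 0 < x s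
  /-- norm completeness -/
  complete : ∀ u : ℕ → ℝ → ℝ, (∀ n, Mem (u n)) →
    (∀ ε : ℝ, 0 < ε → ∃ n₀ : ℕ, ∀ m n, n₀ ≤ m → n₀ ≤ n → N (u m - u n) < ε) →
    ∃ x, Mem x ∧ Tendsto (fun n => N (u n - x)) atTop (𝓝 0)
  /-- symmetry: equimeasurable functions have equal norms -/
  symmetric : ∀ ⦃x y⦄, AEMeasurable x (muI α) → Mem y →
    distr α x = distr α y → Mem x ∧ N x = N y
  /-- the Fatou property -/
  fatou : ∀ (u : ℕ → ℝ → ℝ) (x : ℝ → ℝ), (∀ n, Mem (u n)) →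
    AEMeasurable x (muI α) →
    (∀ n, ∀ᵐ s ∂(muI α), 0 ≤ u n s) →
    (∀ n, ∀ᵐ s ∂(muI α), u n s ≤ u (n + 1) s) →
    (∀ᵐ s ∂(muI α), Tendsto (fun n => u n s) atTop (𝓝 (x s))) →
    (∃ C : ℝ, ∀ n, N (u n) ≤ C) →
    Mem x ∧ Tendsto (fun n => N (u n)) atTop (𝓝 (N x))

variable {α : ℝ≥0∞}

/-- The fundamental function `φ(t) = ‖χ_{(0,t)}‖_E`. -/
def SymmetricBFS.fund (E : SymmetricBFS α) (t : ℝ) : ℝ :=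
  E.N (Set.indicator (Set.Ioo 0 t) fun _ => (1 : ℝ))

/-- `x` is a point of lower local uniform `K`-monotonicity (`LLUKM` point). -/
def SymmetricBFS.IsLLUKMPoint (E : SymmetricBFS α) (x : ℝ → ℝ) : Prop :=
  ∀ u : ℕ → ℝ → ℝ, (∀ n, E.Mem (u n)) → (∀ n, HLP α (u n) x) →
    Tendsto (fun n => E.N (u n)) atTop (𝓝 (E.N x)) →
    Tendsto (fun n => E.N (rearr α (u n) - rearr α x)) atTop (𝓝 0)

/-- `x` is a point of upper local uniform `K`-monotonicity (`ULUKM` point). -/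
def SymmetricBFS.IsULUKMPoint (E : SymmetricBFS α) (x : ℝ → ℝ) : Prop :=
  ∀ u : ℕ → ℝ → ℝ, (∀ n, E.Mem (u n)) → (∀ n, HLP α x (u n)) →
    Tendsto (fun n => E.N (u n)) atTop (𝓝 (E.N x)) →
    Tendsto (fun n => E.N (rearr α x - rearr α (u n))) atTop (𝓝 0)

/-- `x` is a point of lower `K`-monotonicity (`LKM` point). -/
def SymmetricBFS.IsLKMPoint (E : SymmetricBFS α) (x : ℝ → ℝ) : Prop :=
  ∀ y : ℝ → ℝ, E.Mem y → HLP α y x → rearr α y ≠ rearr α x → E.N y < E.N x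

/-- `x` is a point of order continuity. -/
def SymmetricBFS.IsOCPoint (E : SymmetricBFS α) (x : ℝ → ℝ) : Prop :=
  ∀ u : ℕ → ℝ → ℝ, (∀ n, E.Mem (u n)) →
    (∀ n, ∀ᵐ s ∂(muI α), 0 ≤ u n s ∧ u n s ≤ |x s|) →
    (∀ᵐ s ∂(muI α), Tendsto (fun n => u n s) atTop (𝓝 0)) →
    Tendsto (fun n => E.N (u n)) atTop (𝓝 0)

/-- `x` is a point of `K`-order continuity. -/
def SymmetricBFS.IsKOCPoint (E : SymmetricBFS α) (x : ℝ → ℝ) : Prop :=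
  ∀ u : ℕ → ℝ → ℝ, (∀ n, E.Mem (u n)) → (∀ n, HLP α (u n) x) →
    (∀ᵐ s ∂(muI α), Tendsto (fun n => rearr α (u n) s) atTop (𝓝 0)) →
    Tendsto (fun n => E.N (u n)) atTop (𝓝 0)

/-- `x` is an `H_g` point (Kadec–Klee point for global convergence in measure). -/
def SymmetricBFS.IsHgPoint (E : SymmetricBFS α) (x : ℝ → ℝ) : Prop :=
  ∀ u : ℕ → ℝ → ℝ, (∀ n, E.Mem (u n)) →
    TendstoInMeasure (muI α) u atTop x →
    Tendsto (fun n => E.N (u n)) atTop (𝓝 (E.N x)) →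
    Tendsto (fun n => E.N (u n - x)) atTop (𝓝 0)

/-- `x` is an `H_l` point (Kadec–Klee point for local convergence in measure). -/
def SymmetricBFS.IsHlPoint (E : SymmetricBFS α) (x : ℝ → ℝ) : Prop :=
  ∀ u : ℕ → ℝ → ℝ, (∀ n, E.Mem (u n)) →
    (∀ A : Set ℝ, muI α A < ∞ → TendstoInMeasure ((muI α).restrict A) u atTop x) →
    Tendsto (fun n => E.N (u n)) atTop (𝓝 (E.N x)) →
    Tendsto (fun n => E.N (u n - x)) atTop (𝓝 0)

/-- A nonnegative `x` is an `LLUM` point (point of lower local uniform monotonicity). -/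
def SymmetricBFS.IsLLUMPoint (E : SymmetricBFS α) (x : ℝ → ℝ) : Prop :=
  ∀ u : ℕ → ℝ → ℝ, (∀ n, E.Mem (u n)) →
    (∀ n, ∀ᵐ s ∂(muI α), 0 ≤ u n s ∧ u n s ≤ x s) →
    Tendsto (fun n => E.N (u n)) atTop (𝓝 (E.N x)) →
    Tendsto (fun n => E.N (u n - x)) atTop (𝓝 0)

/-- A nonnegative `x` is a `ULUM` point (point of upper local uniform monotonicity). -/
def SymmetricBFS.IsULUMPoint (E : SymmetricBFS α) (x : ℝ → ℝ) : Prop :=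
  ∀ u : ℕ → ℝ → ℝ, (∀ n, E.Mem (u n)) →
    (∀ n, ∀ᵐ s ∂(muI α), x s ≤ u n s) →
    Tendsto (fun n => E.N (u n)) atTop (𝓝 (E.N x)) →
    Tendsto (fun n => E.N (u n - x)) atTop (𝓝 0)

/-- The Lorentz norm `‖x‖_{Λ_{1,w}} = ∫₀¹ x*(t) w(t) dt` on `I = [0,1]`. -/
def lorN (w : ℝ → ℝ) (x : ℝ → ℝ) : ℝ := ∫ t in Set.Ioo (0 : ℝ) 1, rearr 1 x t * w t

/-- The norm of `E = Λ_{1,ψ'} ∩ L^∞`: `‖x‖_E = ‖x‖_{Λ_{1,ψ'}} + ‖x‖_{L^∞}`. -/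
def EN17 (w : ℝ → ℝ) (x : ℝ → ℝ) : ℝ := lorN w x + (eLpNorm x ⊤ (muI 1)).toReal

/-- Membership in `E = Λ_{1,ψ'} ∩ L^∞`. -/
def Mem17 (w : ℝ → ℝ) (x : ℝ → ℝ) : Prop :=
  AEMeasurable x (muI 1) ∧
  MeasureTheory.IntegrableOn (fun t => rearr 1 x t * w t) (Set.Ioo (0 : ℝ) 1) volume ∧
  MemLp x ⊤ (muI 1)

/-- The function `x(t) = (1 − t)·χ_{[0,1]}(t)`. -/
def x17 : ℝ → ℝ := Set.indicator (Set.Icc (0 : ℝ) 1) fun t => 1 - t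

section Basic

lemma muI_one : muI 1 = volume.restrict (Set.Ico 0 1) := by
  unfold muI
  congr 1
  ext s
  simp only [Set.mem_setOf_eq, Set.mem_Ico]
  constructor
  · rintro ⟨h0, h1⟩
    refine ⟨h0, ?_⟩
    by_contra h
    push_neg at h
    have : (1 : ℝ≥0∞) ≤ ENNReal.ofReal s := by
      simpa [ENNReal.ofReal_one] using ENNReal.ofReal_le_ofReal h
    exact absurd h1 (not_lt.2 this)
  · rintro ⟨h0, h1⟩
    exact ⟨h0, by simpa [ENNReal.ofReal_one] using (ENNReal.ofReal_lt_ofReal_iff one_pos).2 h1⟩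

lemma distr_eq (f : ℝ → ℝ) (lam : ℝ) :
    distr 1 f lam = volume ({s : ℝ | lam < |f s|} ∩ Set.Ico 0 1) := by
  rw [distr, muI_one, Measure.restrict_apply' measurableSet_Ico]

lemma distr_anti (α : ℝ≥0∞) (f : ℝ → ℝ) : Antitone (distr α f) := by
  intro a b hab
  exact measure_mono fun s hs => lt_of_le_of_lt hab hs

lemma distr_zero_of_ae {f : ℝ → ℝ} {M lam : ℝ} (h : ∀ᵐ s ∂(muI 1), |f s| ≤ M)
    (hM : M ≤ lam) : distr 1 f lam = 0 := by
  have h0 : muI 1 {s : ℝ | ¬ |f s| ≤ M} = 0 := by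
    simpa [ae_iff] using h
  refine measure_mono_null (fun s hs => ?_) h0
  simp only [Set.mem_setOf_eq, not_le] at hs ⊢
  exact lt_of_le_of_lt hM hs

lemma rearr_nonneg (α : ℝ≥0∞) (f : ℝ → ℝ) (t : ℝ) : 0 ≤ rearr α f t :=
  Real.sInf_nonneg fun _ hx => hx.1.le

lemma rearr_le {f : ℝ → ℝ} {lam t : ℝ} (hlam : 0 < lam)
    (h : distr 1 f lam ≤ ENNReal.ofReal t) : rearr 1 f t ≤ lam :=
  csInf_le ⟨0, fun _ hx => hx.1.le⟩ ⟨hlam, h⟩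

lemma rearr_le_of_ae_bound {f : ℝ → ℝ} {M : ℝ} (hM : 0 < M)
    (h : ∀ᵐ s ∂(muI 1), |f s| ≤ M) (t : ℝ) : rearr 1 f t ≤ M :=
  rearr_le hM (by rw [distr_zero_of_ae h le_rfl]; exact zero_le)

lemma rearr_set_nonempty {f : ℝ → ℝ} {M : ℝ} (hM : 0 < M)
    (h : ∀ᵐ s ∂(muI 1), |f s| ≤ M) (t : ℝ) :
    {lam : ℝ | 0 < lam ∧ distr 1 f lam ≤ ENNReal.ofReal t}.Nonempty :=
  ⟨M, hM, by rw [distr_zero_of_ae h le_rfl]; exact zero_le⟩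

lemma rearr_anti {f : ℝ → ℝ} {M : ℝ} (hM : 0 < M)
    (h : ∀ᵐ s ∂(muI 1), |f s| ≤ M) : Antitone (rearr 1 f) := by
  intro a b hab
  refine csInf_le_csInf ⟨0, fun _ hx => hx.1.le⟩ (rearr_set_nonempty hM h a) ?_
  rintro lam ⟨h1, h2⟩
  exact ⟨h1, h2.trans (ENNReal.ofReal_le_ofReal hab)⟩

lemma rearr_measurable {f : ℝ → ℝ} {M : ℝ} (hM : 0 < M)
    (h : ∀ᵐ s ∂(muI 1), |f s| ≤ M) : Measurable (rearr 1 f) :=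
  (rearr_anti hM h).measurable

lemma exists_ae_bound {f : ℝ → ℝ} (h : MemLp f ⊤ (muI 1)) :
    ∃ M : ℝ, 0 < M ∧ ∀ᵐ s ∂(muI 1), |f s| ≤ M := by
  have hK : eLpNormEssSup f (muI 1) < ∞ := by
    have := h.2; rwa [eLpNorm_exponent_top] at this
  refine ⟨(eLpNormEssSup f (muI 1)).toReal + 1, by positivity, ?_⟩
  filter_upwards [ae_le_eLpNormEssSup (f := f) (μ := muI 1)] with s hs
  have : (‖f s‖₊ : ℝ≥0∞).toReal ≤ (eLpNormEssSup f (muI 1)).toReal :=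
    ENNReal.toReal_mono hK.ne hs
  simp only [ENNReal.coe_toReal, coe_nnnorm, Real.norm_eq_abs] at this
  linarith

end Basic

section X17

lemma x17_abs_le (s : ℝ) : |x17 s| ≤ 1 := by
  unfold x17
  by_cases h : s ∈ Set.Icc (0:ℝ) 1
  · rw [Set.indicator_of_mem h]
    rw [abs_le]
    exact ⟨by linarith [h.2], by linarith [h.1]⟩
  · rw [Set.indicator_of_notMem h]; norm_num

lemma x17_ae_bound : ∀ᵐ s ∂(muI 1), |x17 s| ≤ 1 := ae_of_all _ x17_abs_le

lemma x17_of_mem {s : ℝ} (h0 : 0 ≤ s) (h1 : s ≤ 1) : x17 s = 1 - s :=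
  Set.indicator_of_mem (Set.mem_Icc.mpr ⟨h0, h1⟩) _

lemma distr_x17_lt {lam : ℝ} (h0 : 0 ≤ lam) (h1 : lam < 1) :
    distr 1 x17 lam = ENNReal.ofReal (1 - lam) := by
  rw [distr_eq]
  have hset : {s : ℝ | lam < |x17 s|} ∩ Set.Ico 0 1 = Set.Ico 0 (1 - lam) := by
    ext s
    simp only [Set.mem_inter_iff, Set.mem_setOf_eq, Set.mem_Ico]
    constructor
    · rintro ⟨hs, hs0, hs1⟩
      refine ⟨hs0, ?_⟩
      rw [x17_of_mem hs0 hs1.le, abs_of_nonneg (by linarith)] at hs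
      linarith
    · rintro ⟨hs0, hs1⟩
      have hs1' : s < 1 := by linarith
      refine ⟨?_, hs0, hs1'⟩
      rw [x17_of_mem hs0 hs1'.le, abs_of_nonneg (by linarith)]
      linarith
  rw [hset, Real.volume_Ico]
  norm_num

lemma distr_x17_ge {lam : ℝ} (h1 : 1 ≤ lam) : distr 1 x17 lam = 0 :=
  distr_zero_of_ae x17_ae_bound h1

lemma rearr_x17_le_one (t : ℝ) : rearr 1 x17 t ≤ 1 :=
  rearr_le_of_ae_bound one_pos x17_ae_bound t

lemma rearr_x17_eq {t : ℝ} (ht0 : 0 < t) (ht1 : t < 1) : rearr 1 x17 t = 1 - t := by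
  have hset : {lam : ℝ | 0 < lam ∧ distr 1 x17 lam ≤ ENNReal.ofReal t} = Set.Ici (1 - t) := by
    ext lam
    simp only [Set.mem_setOf_eq, Set.mem_Ici]
    constructor
    · rintro ⟨hpos, hle⟩
      by_contra h
      push_neg at h
      have hlt1 : lam < 1 := by linarith
      rw [distr_x17_lt hpos.le hlt1] at hle
      have := (ENNReal.ofReal_le_ofReal_iff ht0.le).1 hle
      linarith
    · intro h
      have hpos : 0 < lam := by linarith
      refine ⟨hpos, ?_⟩
      by_cases hl : lam < 1
      · rw [distr_x17_lt hpos.le hl]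
        exact ENNReal.ofReal_le_ofReal (by linarith)
      · rw [distr_x17_ge (by linarith)]
        exact zero_le
  rw [rearr, hset, csInf_Ici]

lemma rearr_x17_one : rearr 1 x17 1 = 0 := by
  have hset : {lam : ℝ | 0 < lam ∧ distr 1 x17 lam ≤ ENNReal.ofReal 1} = Set.Ioi 0 := by
    ext lam
    simp only [Set.mem_setOf_eq, Set.mem_Ioi]
    refine ⟨fun h => h.1, fun h => ⟨h, ?_⟩⟩
    by_cases hl : lam < 1
    · rw [distr_x17_lt h.le hl]
      exact ENNReal.ofReal_le_ofReal (by linarith)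
    · rw [distr_x17_ge (by linarith)]
      exact zero_le
  rw [rearr, hset, csInf_Ioi]

lemma integral_rearr_x17 {t : ℝ} (ht0 : 0 < t) (ht1 : t ≤ 1) :
    ∫ s in Set.Ioc 0 t, rearr 1 x17 s = t - t ^ 2 / 2 := by
  have hcongr : ∀ s ∈ Set.Ioc (0:ℝ) t, rearr 1 x17 s = 1 - s := by
    intro s hs
    rcases lt_or_eq_of_le (hs.2.trans ht1) with h | h
    · exact rearr_x17_eq hs.1 h
    · rw [h, rearr_x17_one]; norm_num
  rw [setIntegral_congr_fun measurableSet_Ioc hcongr,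
    ← intervalIntegral.integral_of_le ht0.le,
    intervalIntegral.integral_sub (continuous_const.intervalIntegrable 0 t)
      (continuous_id'.intervalIntegrable 0 t)]
  have h1 : ∫ _ in (0:ℝ)..t, (1:ℝ) = t := by simp
  have h2 : ∫ s in (0:ℝ)..t, s = t ^ 2 / 2 := by
    simpa using integral_id (a := (0:ℝ)) (b := t)
  rw [h1, h2]

end X17

section AntitoneInt

lemma antitone_integrableOn {v : ℝ → ℝ} (hv : Antitone v) (a b : ℝ) :
    MeasureTheory.IntegrableOn v (Set.Ioc a b) volume := by
  rcases le_or_gt b a with h | h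
  · rw [Set.Ioc_eq_empty (not_lt.2 h)]
    exact integrableOn_empty
  · refine Integrable.mono' (g := fun _ => max |v a| |v b|)
      (integrableOn_const measure_Ioc_lt_top.ne)
      hv.measurable.aestronglyMeasurable ?_
    refine (ae_restrict_iff' measurableSet_Ioc).2 (ae_of_all _ fun s hs => ?_)
    rw [Real.norm_eq_abs, abs_le]
    constructor
    · calc -(max |v a| |v b|) ≤ -|v b| := by simp
        _ ≤ v b := neg_abs_le _
        _ ≤ v s := hv hs.2
    · calc v s ≤ v a := hv hs.1.le
        _ ≤ |v a| := le_abs_self _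
        _ ≤ max |v a| |v b| := le_max_left _ _

lemma setIntegral_Ioc_le_antitone {v : ℝ → ℝ} (hv : Antitone v) {a b : ℝ} (hab : a ≤ b) :
    ∫ s in Set.Ioc a b, v s ≤ (b - a) * v a := by
  have h : ∫ s in Set.Ioc a b, v s ≤ ∫ _ in Set.Ioc a b, v a := by
    refine setIntegral_mono_on (antitone_integrableOn hv a b)
      (integrableOn_const measure_Ioc_lt_top.ne) measurableSet_Ioc ?_
    exact fun s hs => hv hs.1.le
  rw [setIntegral_const, Real.volume_real_Ioc_of_le hab] at h
  simpa [smul_eq_mul] using h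

lemma le_setIntegral_Ioc_antitone {v : ℝ → ℝ} (hv : Antitone v) {a b : ℝ} (hab : a ≤ b) :
    (b - a) * v b ≤ ∫ s in Set.Ioc a b, v s := by
  have h : ∫ _ in Set.Ioc a b, v b ≤ ∫ s in Set.Ioc a b, v s := by
    refine setIntegral_mono_on (integrableOn_const measure_Ioc_lt_top.ne)
      (antitone_integrableOn hv a b) measurableSet_Ioc ?_
    exact fun s hs => hv hs.2
  rw [setIntegral_const, Real.volume_real_Ioc_of_le hab] at h
  simpa [smul_eq_mul] using h

lemma setIntegral_Ioc_add {v : ℝ → ℝ} (hv : Antitone v) {a b c : ℝ} (hab : a ≤ b) (hbc : b ≤ c) :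
    ∫ s in Set.Ioc a c, v s = (∫ s in Set.Ioc a b, v s) + ∫ s in Set.Ioc b c, v s := by
  rw [← Set.Ioc_union_Ioc_eq_Ioc hab hbc]
  exact setIntegral_union (Set.Ioc_disjoint_Ioc_of_le le_rfl) measurableSet_Ioc
    (antitone_integrableOn hv a b) (antitone_integrableOn hv b c)

end AntitoneInt

section Psi

variable {ψ ψ' : ℝ → ℝ}

lemma psi'_eq_deriv (hderiv : ∀ t ∈ Set.Ioi (0:ℝ), HasDerivAt ψ (ψ' t) t) :
    ∀ t ∈ Set.Ioi (0:ℝ), deriv ψ t = ψ' t := fun t ht => (hderiv t ht).deriv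

lemma derivPsi_pos (hconc : StrictConcaveOn ℝ (Set.Ici (0 : ℝ)) ψ)
    (hmono : StrictMonoOn ψ (Set.Ici (0 : ℝ)))
    (hderiv : ∀ t ∈ Set.Ioi (0:ℝ), HasDerivAt ψ (ψ' t) t) :
    ∀ t ∈ Set.Ioi (0:ℝ), 0 < deriv ψ t := by
  intro t ht
  have ht' : (0:ℝ) ≤ t := le_of_lt ht
  have hslope : slope ψ t (t + 1) ≤ ψ' t :=
    ConcaveOn.slope_le_of_hasDerivAt hconc.concaveOn (Set.mem_Ici.2 ht')
      (Set.mem_Ici.2 (by linarith)) (by linarith) (hderiv t ht)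
  have hspos : 0 < slope ψ t (t + 1) := by
    rw [slope_def_field]
    apply div_pos
    · exact sub_pos.2 (hmono (Set.mem_Ici.2 ht') (Set.mem_Ici.2 (by linarith)) (by linarith))
    · linarith
  rw [(hderiv t ht).deriv]
  linarith

lemma derivPsi_strictAnti (hconc : StrictConcaveOn ℝ (Set.Ici (0 : ℝ)) ψ)
    (hderiv : ∀ t ∈ Set.Ioi (0:ℝ), HasDerivAt ψ (ψ' t) t) :
    StrictAntiOn (deriv ψ) (Set.Ioi 0) :=
  StrictConcaveOn.strictAntiOn_deriv
    (hconc.subset Set.Ioi_subset_Ici_self (convex_Ioi 0))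
    (fun x hx => (hderiv x hx).differentiableAt)

lemma derivPsi_anti (hconc : StrictConcaveOn ℝ (Set.Ici (0 : ℝ)) ψ)
    (hderiv : ∀ t ∈ Set.Ioi (0:ℝ), HasDerivAt ψ (ψ' t) t) :
    AntitoneOn (deriv ψ) (Set.Ioi 0) :=
  (derivPsi_strictAnti hconc hderiv).antitoneOn

lemma derivPsi_intervalIntegrable (hconc : StrictConcaveOn ℝ (Set.Ici (0 : ℝ)) ψ)
    (hderiv : ∀ t ∈ Set.Ioi (0:ℝ), HasDerivAt ψ (ψ' t) t)
    {a : ℝ} (ha : 0 < a) (hab : a ≤ 1) :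
    IntervalIntegrable (deriv ψ) volume a 1 := by
  apply AntitoneOn.intervalIntegrable
  apply (derivPsi_anti hconc hderiv).mono
  rw [Set.uIcc_of_le hab]
  exact fun x hx => lt_of_lt_of_le ha hx.1

lemma derivPsi_FTC (hconc : StrictConcaveOn ℝ (Set.Ici (0 : ℝ)) ψ)
    (hderiv : ∀ t ∈ Set.Ioi (0:ℝ), HasDerivAt ψ (ψ' t) t)
    {a : ℝ} (ha : 0 < a) (hab : a ≤ 1) :
    ∫ s in Set.Ioc a 1, deriv ψ s = ψ 1 - ψ a := by
  rw [← intervalIntegral.integral_of_le hab]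
  apply intervalIntegral.integral_eq_sub_of_hasDerivAt
  · intro x hx
    rw [Set.uIcc_of_le hab] at hx
    have hx0 : x ∈ Set.Ioi (0:ℝ) := lt_of_lt_of_le ha hx.1
    exact ((hderiv x hx0).differentiableAt).hasDerivAt
  · exact derivPsi_intervalIntegrable hconc hderiv ha hab

lemma derivPsi_integrableOn (hconc : StrictConcaveOn ℝ (Set.Ici (0 : ℝ)) ψ)
    (hmono : StrictMonoOn ψ (Set.Ici (0 : ℝ)))
    (hzero : ψ 0 = 0)
    (hderiv : ∀ t ∈ Set.Ioi (0:ℝ), HasDerivAt ψ (ψ' t) t) :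
    MeasureTheory.IntegrableOn (deriv ψ) (Set.Ioo 0 1) volume := by
  have hpos := derivPsi_pos hconc hmono hderiv
  set ν : Measure ℝ := volume.withDensity (fun s => ENNReal.ofReal (deriv ψ s)) with hν
  have hmeasD : Measurable (deriv ψ) := measurable_deriv ψ
  have hνIoc : ∀ n : ℕ, ν (Set.Ioc (1/(n+2) : ℝ) 1) ≤ ENNReal.ofReal (ψ 1) := by
    intro n
    have ha : (0:ℝ) < 1/(n+2) := by positivity
    have hab : (1/(n+2) : ℝ) ≤ 1 := by
      rw [div_le_one (by positivity)]
      have : (0:ℝ) ≤ (n:ℝ) := Nat.cast_nonneg n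
      linarith
    rw [hν, withDensity_apply _ measurableSet_Ioc]
    have hInt : MeasureTheory.IntegrableOn (deriv ψ) (Set.Ioc (1/(n+2):ℝ) 1) volume :=
      (intervalIntegrable_iff_integrableOn_Ioc_of_le hab).1
        (derivPsi_intervalIntegrable hconc hderiv ha hab)
    have hnn : 0 ≤ᵐ[volume.restrict (Set.Ioc (1/(n+2):ℝ) 1)] deriv ψ := by
      refine (ae_restrict_iff' measurableSet_Ioc).2 (ae_of_all _ fun s hs => ?_)
      exact (hpos s (lt_of_lt_of_le ha hs.1.le)).le
    rw [← MeasureTheory.ofReal_integral_eq_lintegral_ofReal hInt hnn,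
      derivPsi_FTC hconc hderiv ha hab]
    apply ENNReal.ofReal_le_ofReal
    have h0a : ψ 0 < ψ (1/(n+2)) :=
      hmono (Set.mem_Ici.2 le_rfl) (Set.mem_Ici.2 ha.le) ha
    rw [hzero] at h0a
    linarith
  have hsub : Set.Ioo (0:ℝ) 1 ⊆ ⋃ n : ℕ, Set.Ioc (1/(n+2) : ℝ) 1 := by
    intro x hx
    obtain ⟨n, hn⟩ := exists_nat_gt (1/x)
    refine Set.mem_iUnion.2 ⟨n, ?_, hx.2.le⟩
    have hx1 : (0:ℝ) < x := hx.1
    have h1 : 1/x < (n:ℝ) + 2 := by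
       have : (0:ℝ) ≤ (n:ℝ) := Nat.cast_nonneg n
       linarith
    rw [div_lt_iff₀ (by positivity)]
    calc (1:ℝ) = (1/x) * x := by field_simp
      _ < ((n:ℝ)+2) * x := mul_lt_mul_of_pos_right h1 hx1
      _ = x * ((n:ℝ)+2) := mul_comm _ _
  have hmon : Monotone (fun n : ℕ => Set.Ioc (1/(n+2) : ℝ) 1) := by
    intro m n hmn
    apply Set.Ioc_subset_Ioc_left
    apply one_div_le_one_div_of_le (by positivity)
    have : (m:ℝ) ≤ (n:ℝ) := Nat.cast_le.2 hmn
    linarith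
  have hν01 : ν (Set.Ioo (0:ℝ) 1) < ∞ := by
    calc ν (Set.Ioo (0:ℝ) 1) ≤ ν (⋃ n : ℕ, Set.Ioc (1/(n+2) : ℝ) 1) := measure_mono hsub
      _ = ⨆ n : ℕ, ν (Set.Ioc (1/(n+2) : ℝ) 1) := hmon.measure_iUnion
      _ ≤ ENNReal.ofReal (ψ 1) := iSup_le hνIoc
      _ < ∞ := ENNReal.ofReal_lt_top
  constructor
  · exact hmeasD.aestronglyMeasurable
  · rw [hasFiniteIntegral_iff_ofReal]
    · rw [← withDensity_apply _ measurableSet_Ioo]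
      exact hν01
    · refine (ae_restrict_iff' measurableSet_Ioo).2 (ae_of_all _ fun s hs => ?_)
      exact (hpos s hs.1).le

end Psi

section Master

lemma master_hardy {g D : ℝ → ℝ}
    (hgm : Measurable g) (hDm : Measurable D)
    (hDanti : AntitoneOn D (Set.Ioi 0))
    (hD0 : ∀ s ∈ Set.Ioi (0:ℝ), 0 < D s)
    (hgbd : ∀ s ∈ Set.Ioc (0:ℝ) 1, |g s| ≤ 2)
    (hDint : MeasureTheory.IntegrableOn D (Set.Ioo 0 1) volume)
    (hG : ∀ c ∈ Set.Icc (0:ℝ) 1, 0 ≤ ∫ s in Set.Ioc 0 c, g s) :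
    (0 ≤ ∫ s in Set.Ioo (0:ℝ) 1, g s * D s) ∧
    ∀ t δ : ℝ, 0 < t → 0 < δ → t + δ < 1 →
      (D t - D (t + δ)) * ((∫ s in Set.Ioc 0 t, g s) - 2 * δ) ≤
        ∫ s in Set.Ioo (0:ℝ) 1, g s * D s := by
  classical
  set A : Set (ℝ × ℝ) := {p : ℝ × ℝ | 0 < p.1 ∧ p.1 < 1 ∧ 0 < p.2 ∧ p.2 < D p.1} with hA_def
  have hA : MeasurableSet A := by
    have h1 : MeasurableSet {p : ℝ × ℝ | 0 < p.1} :=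
      measurableSet_lt measurable_const measurable_fst
    have h2 : MeasurableSet {p : ℝ × ℝ | p.1 < 1} :=
      measurableSet_lt measurable_fst measurable_const
    have h3 : MeasurableSet {p : ℝ × ℝ | 0 < p.2} :=
      measurableSet_lt measurable_const measurable_snd
    have h4 : MeasurableSet {p : ℝ × ℝ | p.2 < D p.1} :=
      measurableSet_lt measurable_snd (hDm.comp measurable_fst)
    have : A = {p : ℝ × ℝ | 0 < p.1} ∩ ({p : ℝ × ℝ | p.1 < 1} ∩
        ({p : ℝ × ℝ | 0 < p.2} ∩ {p : ℝ × ℝ | p.2 < D p.1})) := by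
      ext p; simp [hA_def, and_assoc]
    rw [this]
    exact h1.inter (h2.inter (h3.inter h4))
  set F : ℝ × ℝ → ℝ := A.indicator (fun q => g q.1) with hF_def
  have hFmeas : Measurable F := (hgm.comp measurable_fst).indicator hA
  -- finiteness of the measure of A
  have hAfin : (volume.prod volume) A < ∞ := by
    rw [Measure.prod_apply hA]
    have hslice : ∀ s : ℝ, volume (Prod.mk s ⁻¹' A) =
        (Set.Ioo (0:ℝ) 1).indicator (fun s => ENNReal.ofReal (D s)) s := by
      intro s
      by_cases hs : s ∈ Set.Ioo (0:ℝ) 1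
      · have hpre : Prod.mk s ⁻¹' A = Set.Ioo 0 (D s) := by
          ext lam
          simp only [Set.mem_preimage, hA_def, Set.mem_setOf_eq, Set.mem_Ioo]
          exact ⟨fun h => ⟨h.2.2.1, h.2.2.2⟩, fun h => ⟨hs.1, hs.2, h.1, h.2⟩⟩
        rw [hpre, Set.indicator_of_mem hs, Real.volume_Ioo, sub_zero]
      · have hpre : Prod.mk s ⁻¹' A = ∅ := by
          ext lam
          simp only [Set.mem_preimage, hA_def, Set.mem_setOf_eq, Set.mem_empty_iff_false,
            iff_false, Set.mem_Ioo] at hs ⊢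
          intro h
          exact hs ⟨h.1, h.2.1⟩
        rw [hpre, Set.indicator_of_notMem hs, measure_empty]
    calc (∫⁻ s, volume (Prod.mk s ⁻¹' A))
        = ∫⁻ s, (Set.Ioo (0:ℝ) 1).indicator (fun s => ENNReal.ofReal (D s)) s :=
          lintegral_congr hslice
      _ = ∫⁻ s in Set.Ioo (0:ℝ) 1, ENNReal.ofReal (D s) :=
          lintegral_indicator measurableSet_Ioo _
      _ ≤ ∫⁻ s in Set.Ioo (0:ℝ) 1, (‖D s‖₊ : ℝ≥0∞) :=
          lintegral_mono fun s => Real.ofReal_le_enorm (D s)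
      _ < ∞ := hDint.2
  -- integrability of F on the product space
  have hFint : MeasureTheory.Integrable F (volume.prod volume) := by
    refine ⟨hFmeas.aestronglyMeasurable, ?_⟩
    have hpt : ∀ p : ℝ × ℝ, (‖F p‖₊ : ℝ≥0∞) ≤ A.indicator (fun _ => (2:ℝ≥0∞)) p := by
      intro p
      by_cases hp : p ∈ A
      · rw [hF_def, Set.indicator_of_mem hp, Set.indicator_of_mem hp]
        have hp1 : p.1 ∈ Set.Ioc (0:ℝ) 1 := ⟨hp.1, hp.2.1.le⟩
        calc (‖g p.1‖₊ : ℝ≥0∞) = ENNReal.ofReal |g p.1| := by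
              rw [← Real.nnnorm_abs]; exact Real.enorm_eq_ofReal (abs_nonneg _)
          _ ≤ ENNReal.ofReal 2 := ENNReal.ofReal_le_ofReal (hgbd p.1 hp1)
          _ = 2 := by norm_num
      · rw [hF_def, Set.indicator_of_notMem hp, Set.indicator_of_notMem hp]
        simp
    calc (∫⁻ p, (‖F p‖₊ : ℝ≥0∞) ∂(volume.prod volume))
        ≤ ∫⁻ p, A.indicator (fun _ => (2:ℝ≥0∞)) p ∂(volume.prod volume) := lintegral_mono hpt
      _ = 2 * (volume.prod volume) A := by
          rw [lintegral_indicator hA, setLIntegral_const]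
      _ < ∞ := ENNReal.mul_lt_top (by norm_num) hAfin
  -- the swap
  have hswap : ∫ s, (∫ lam, F (s, lam)) = ∫ lam, (∫ s, F (s, lam)) :=
    MeasureTheory.integral_integral_swap (f := fun s lam => F (s, lam)) hFint
  -- inner integral in lam
  have hinner : ∀ s : ℝ, (∫ lam, F (s, lam)) =
      (Set.Ioo (0:ℝ) 1).indicator (fun s => g s * D s) s := by
    intro s
    by_cases hs : s ∈ Set.Ioo (0:ℝ) 1
    · have : (fun lam => F (s, lam)) = (Set.Ioo 0 (D s)).indicator (fun _ => g s) := by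
        funext lam
        by_cases hlam : lam ∈ Set.Ioo (0:ℝ) (D s)
        · rw [Set.indicator_of_mem hlam]
          exact Set.indicator_of_mem (show (s, lam) ∈ A from ⟨hs.1, hs.2, hlam.1, hlam.2⟩) _
        · rw [Set.indicator_of_notMem hlam]
          refine Set.indicator_of_notMem (fun hp => hlam ⟨hp.2.2.1, hp.2.2.2⟩) _
      rw [this, integral_indicator_const _ measurableSet_Ioo, Set.indicator_of_mem hs,
        Real.volume_real_Ioo_of_le (hD0 s hs.1).le, sub_zero, smul_eq_mul,
        mul_comm]
    · have : (fun lam => F (s, lam)) = fun _ => (0:ℝ) := by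
        funext lam
        refine Set.indicator_of_notMem (fun hp => hs ⟨hp.1, hp.2.1⟩) _
      rw [this, integral_zero, Set.indicator_of_notMem hs]
  have hLHS : (∫ s, (∫ lam, F (s, lam))) = ∫ s in Set.Ioo (0:ℝ) 1, g s * D s := by
    rw [show (fun s => ∫ lam, F (s, lam)) =
        (Set.Ioo (0:ℝ) 1).indicator (fun s => g s * D s) from funext hinner,
      integral_indicator measurableSet_Ioo]
  set H : ℝ → ℝ := fun lam => ∫ s, F (s, lam) with hH_def
  have hmain : ∫ s in Set.Ioo (0:ℝ) 1, g s * D s = ∫ lam, H lam := by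
    rw [← hLHS]; exact hswap
  have hH_int : MeasureTheory.Integrable H volume := hFint.integral_prod_right
  have hg_int : MeasureTheory.IntegrableOn g (Set.Ioc (0:ℝ) 1) volume := by
    refine Integrable.mono' (g := fun _ => 2)
      (integrableOn_const measure_Ioc_lt_top.ne) hgm.aestronglyMeasurable ?_
    refine (ae_restrict_iff' measurableSet_Ioc).2 (ae_of_all _ fun s hs => ?_)
    simpa [Real.norm_eq_abs] using hgbd s hs
  -- key evaluation of H for positive lam
  have key : ∀ lam : ℝ, 0 < lam → ∃ c, c ∈ Set.Icc (0:ℝ) 1 ∧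
      H lam = ∫ s in Set.Ioc 0 c, g s ∧
      (∀ s ∈ Set.Ioo (0:ℝ) 1, lam < D s → s ≤ c) ∧
      (∀ b, 0 ≤ b → (∀ s ∈ Set.Ioo (0:ℝ) 1, lam < D s → s ≤ b) → c ≤ b) := by
    intro lam hlam
    set S : Set ℝ := {s | s ∈ Set.Ioo (0:ℝ) 1 ∧ lam < D s} with hS_def
    have hSmeas : MeasurableSet S := by
      have : S = Set.Ioo (0:ℝ) 1 ∩ {s | lam < D s} := by ext s; simp [hS_def, Set.mem_setOf_eq]
      rw [this]
      exact measurableSet_Ioo.inter (measurableSet_lt measurable_const hDm)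
    have hbdd : BddAbove (insert (0:ℝ) S) := by
      refine ⟨1, ?_⟩
      rintro y (rfl | hy)
      · norm_num
      · exact hy.1.2.le
    set c : ℝ := sSup (insert (0:ℝ) S) with hc_def
    have hne : (insert (0:ℝ) S).Nonempty := ⟨0, Set.mem_insert _ _⟩
    have hc0 : 0 ≤ c := le_csSup hbdd (Set.mem_insert _ _)
    have hc1 : c ≤ 1 := by
      apply csSup_le hne
      rintro y (rfl | hy)
      · norm_num
      · exact hy.1.2.le
    have hle : ∀ s ∈ S, s ≤ c := fun s hs => le_csSup hbdd (Set.mem_insert_of_mem _ hs)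
    have hmax : ∀ b, 0 ≤ b → (∀ s ∈ Set.Ioo (0:ℝ) 1, lam < D s → s ≤ b) → c ≤ b := by
      intro b hb hub
      apply csSup_le hne
      rintro y (rfl | hy)
      · exact hb
      · exact hub y hy.1 hy.2
    have hae : S =ᵐ[volume] Set.Ioc 0 c := by
      rw [MeasureTheory.ae_eq_set]
      constructor
      · have : S \ Set.Ioc 0 c = ∅ :=
          Set.diff_eq_empty.2 (fun s hs => ⟨hs.1.1, hle s hs⟩)
        rw [this, measure_empty]
      · refine measure_mono_null (t := {c}) (fun s hs => ?_) Real.volume_singleton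
        simp only [Set.mem_diff, Set.mem_Ioc] at hs
        obtain ⟨⟨hs0, hsc⟩, hsS⟩ := hs
        rcases lt_or_eq_of_le hsc with hlt | heq
        · exfalso
          obtain ⟨y, hy, hsy⟩ := exists_lt_of_lt_csSup hne hlt
          rcases hy with rfl | hyS
          · exact absurd hsy (not_lt.2 hs0.le)
          · refine hsS ⟨⟨hs0, lt_trans hsy hyS.1.2⟩, ?_⟩
            calc lam < D y := hyS.2
              _ ≤ D s := hDanti hs0 (lt_trans hs0 hsy) hsy.le
        · exact heq ▸ Set.mem_singleton _
    have hHeq : H lam = ∫ s in S, g s := by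
      have : (fun s => F (s, lam)) = S.indicator g := by
        funext s
        by_cases hs : s ∈ S
        · rw [Set.indicator_of_mem hs]
          exact Set.indicator_of_mem (show (s, lam) ∈ A from ⟨hs.1.1, hs.1.2, hlam, hs.2⟩) _
        · rw [Set.indicator_of_notMem hs]
          exact Set.indicator_of_notMem
            (fun hp => hs ⟨⟨hp.1, hp.2.1⟩, hp.2.2.2⟩) _
      rw [hH_def]
      simp only
      rw [this, integral_indicator hSmeas]
    refine ⟨c, ⟨hc0, hc1⟩, ?_, fun s hs hD => hle s ⟨hs, hD⟩, hmax⟩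
    rw [hHeq]
    exact setIntegral_congr_set hae
  -- H is nonnegative
  have hH_nonneg : ∀ lam, 0 ≤ H lam := by
    intro lam
    rcases le_or_gt lam 0 with hlam | hlam
    · have : (fun s => F (s, lam)) = fun _ => (0:ℝ) := by
        funext s
        exact Set.indicator_of_notMem (fun hp => absurd hp.2.2.1 (not_lt.2 hlam)) _
      rw [hH_def]; simp only; rw [this, integral_zero]
    · obtain ⟨c, hc, hHeq, -, -⟩ := key lam hlam
      rw [hHeq]
      exact hG c hc
  constructor
  · rw [hmain]
    exact integral_nonneg hH_nonneg
  · intro t δ ht hδ htδ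
    have htIoi : t ∈ Set.Ioi (0:ℝ) := ht
    have htδIoi : (t + δ) ∈ Set.Ioi (0:ℝ) := by simp only [Set.mem_Ioi]; linarith
    have hDts : D (t + δ) ≤ D t := hDanti htIoi htδIoi (by linarith)
    set L : Set ℝ := Set.Ioo (D (t + δ)) (D t) with hL_def
    set e : ℝ := (∫ s in Set.Ioc 0 t, g s) - 2 * δ with he_def
    have hφle : ∀ lam, L.indicator (fun _ => e) lam ≤ H lam := by
      intro lam
      by_cases hlam : lam ∈ L
      · rw [Set.indicator_of_mem hlam]
        have hlampos : 0 < lam := lt_trans (hD0 _ htδIoi) hlam.1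
        obtain ⟨c, hc, hHeq, hlb, hub⟩ := key lam hlampos
        have htc : t ≤ c := hlb t ⟨ht, by linarith⟩ hlam.2
        have hctδ : c ≤ t + δ := by
          apply hub (t + δ) (by linarith)
          intro s hs hD
          by_contra hcon
          push_neg at hcon
          have : D s ≤ D (t + δ) := hDanti htδIoi hs.1 hcon.le
          exact absurd hlam.1 (not_lt.2 (le_trans (le_of_lt hD) this))
        have hsplit : ∫ s in Set.Ioc 0 c, g s =
            (∫ s in Set.Ioc 0 t, g s) + ∫ s in Set.Ioc t c, g s := by
          rw [← Set.Ioc_union_Ioc_eq_Ioc ht.le htc]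
          exact setIntegral_union (Set.Ioc_disjoint_Ioc_of_le le_rfl) measurableSet_Ioc
            (hg_int.mono_set (Set.Ioc_subset_Ioc_right (le_trans htc hc.2)))
            (hg_int.mono_set (fun s hs => ⟨lt_trans ht hs.1, le_trans hs.2 hc.2⟩))
        have htail : |∫ s in Set.Ioc t c, g s| ≤ 2 * δ := by
          have hnorm : ‖∫ s in Set.Ioc t c, g s‖ ≤ 2 * (volume (Set.Ioc t c)).toReal := by
            apply norm_setIntegral_le_of_norm_le_const measure_Ioc_lt_top
              (fun s hs => by
                rw [Real.norm_eq_abs]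
                exact hgbd s ⟨lt_trans ht hs.1, le_trans hs.2 hc.2⟩)
          rw [Real.norm_eq_abs] at hnorm
          refine le_trans hnorm ?_
          rw [Real.volume_Ioc, ENNReal.toReal_ofReal (by linarith)]
          nlinarith
        rw [hHeq, hsplit, he_def]
        have := abs_le.1 htail
        linarith [this.1]
      · rw [Set.indicator_of_notMem hlam]
        exact hH_nonneg lam
    have hφ_int : MeasureTheory.Integrable (L.indicator (fun _ => e)) volume := by
      apply MeasureTheory.IntegrableOn.integrable_indicator _ measurableSet_Ioo
      exact integrableOn_const (by rw [Real.volume_Ioo]; exact ENNReal.ofReal_lt_top.ne)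
    calc (D t - D (t + δ)) * e = (volume L).toReal • e := by
          rw [hL_def, Real.volume_Ioo, ENNReal.toReal_ofReal (by linarith), smul_eq_mul]
      _ = ∫ lam, L.indicator (fun _ => e) lam := (integral_indicator_const _ measurableSet_Ioo).symm
      _ ≤ ∫ lam, H lam := integral_mono hφ_int hH_int hφle
      _ = ∫ s in Set.Ioo (0:ℝ) 1, g s * D s := hmain.symm

end Master

section Unif

lemma unif_G {Gn : ℕ → ℝ → ℝ} (hG0 : ∀ n, Gn n 0 = 0)
    (hLip : ∀ n, ∀ a b : ℝ, 0 ≤ a → a ≤ b → b ≤ 1 → Gn n b - Gn n a ≤ 2 * (b - a))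
    (hpt : ∀ t ∈ Set.Ioo (0:ℝ) 1, ∀ ε > 0, ∀ᶠ n in atTop, Gn n t ≤ ε)
    {ε : ℝ} (hε : 0 < ε) :
    ∀ᶠ n in atTop, ∀ t ∈ Set.Icc (0:ℝ) 1, Gn n t ≤ ε := by
  obtain ⟨m, hm⟩ := exists_nat_gt (8 / ε)
  have hm0 : 0 < m := by
    rcases Nat.eq_zero_or_pos m with rfl | h
    · exfalso
      simp only [Nat.cast_zero] at hm
      have : 0 < 8 / ε := by positivity
      linarith
    · exact h
  have hmR : (0:ℝ) < m := Nat.cast_pos.2 hm0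
  have h8 : 8 / (m:ℝ) < ε := by
    rw [div_lt_iff₀ hmR]
    rw [div_lt_iff₀ hε] at hm
    nlinarith
  have hev : ∀ᶠ n in atTop, ∀ j ∈ Finset.range m, Gn n ((j:ℝ) / m) ≤ ε / 2 := by
    rw [Filter.eventually_all_finset]
    intro j hj
    rcases Nat.eq_zero_or_pos j with rfl | hjpos
    · refine Filter.Eventually.of_forall fun n => ?_
      simp only [Nat.cast_zero, zero_div, hG0 n]
      positivity
    · refine hpt ((j:ℝ)/m) ⟨by positivity, ?_⟩ (ε/2) (by positivity)
      rw [div_lt_one hmR]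
      exact_mod_cast Finset.mem_range.1 hj
  filter_upwards [hev] with n hn t ht
  set j : ℕ := min (⌊t * m⌋₊) (m - 1) with hj_def
  have hjm : j ∈ Finset.range m :=
    Finset.mem_range.2 (lt_of_le_of_lt (min_le_right _ _) (Nat.sub_lt hm0 one_pos))
  have h1 : (j:ℝ) ≤ t * m := by
    have ha : (j:ℕ) ≤ ⌊t * m⌋₊ := min_le_left _ _
    have hb : ((⌊t * m⌋₊ : ℕ):ℝ) ≤ t * m := Nat.floor_le (mul_nonneg ht.1 hmR.le)
    exact le_trans (Nat.cast_le.2 ha) hb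
  have h2 : t * m ≤ (j:ℝ) + 2 := by
    rcases le_or_gt (⌊t * m⌋₊) (m - 1) with hfl | hfl
    · have hje : j = ⌊t * m⌋₊ := min_eq_left hfl
      have hlt := Nat.lt_floor_add_one (t * m)
      rw [← hje] at hlt
      have : t * m < (j:ℝ) + 1 := by exact_mod_cast hlt
      linarith
    · have hje : j = m - 1 := min_eq_right hfl.le
      have hcast : (j:ℝ) = (m:ℝ) - 1 := by
        rw [hje, Nat.cast_sub hm0, Nat.cast_one]
      have htm : t * m ≤ m := by nlinarith [ht.2]
      rw [hcast]
      linarith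
  have hjle : (j:ℝ)/m ≤ t := by
    rw [div_le_iff₀ hmR]
    exact h1
  have hdiff : t - (j:ℝ)/m ≤ 2/m := by
    have : t ≤ ((j:ℝ) + 2)/m := by
      rw [le_div_iff₀ hmR]
      exact h2
    have hsplit : ((j:ℝ) + 2)/m = (j:ℝ)/m + 2/m := by ring
    linarith [hsplit ▸ this]
  have hjpos : (0:ℝ) ≤ (j:ℝ)/m := by positivity
  have h48 : (8:ℝ)/m = 2*(4/m) := by ring
  calc Gn n t = Gn n ((j:ℝ)/m) + (Gn n t - Gn n ((j:ℝ)/m)) := by ring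
    _ ≤ ε/2 + 2*(t - (j:ℝ)/m) := add_le_add (hn j hjm) (hLip n _ t hjpos hjle ht.2)
    _ ≤ ε/2 + 2*(2/m) := by linarith
    _ ≤ ε := by
        have h4 : (2:ℝ)*(2/m) = 4/m := by ring
        linarith

lemma unif_v {v : ℝ → ℝ} (hv : Antitone v) (hv0 : ∀ s, 0 ≤ v s)
    (hle : ∀ t, 0 < t → t ≤ 1 → ∫ s in Set.Ioc 0 t, v s ≤ t - t ^ 2 / 2)
    {ε : ℝ} (hε : 0 < ε) (hε1 : ε ≤ 1)
    (hG : ∀ t, 0 < t → t ≤ 1 → (t - t ^ 2 / 2) - (∫ s in Set.Ioc 0 t, v s) ≤ ε ^ 2 / 8) :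
    ∀ r ∈ Set.Ioo (0:ℝ) 1, |v r - (1 - r)| ≤ ε := by
  intro r hr
  have hr0 : 0 < r := hr.1
  have hr1 : r < 1 := hr.2
  set h : ℝ := ε / 2 with hh_def
  have hh0 : 0 < h := by rw [hh_def]; positivity
  rw [abs_le]
  constructor
  · -- lower bound : -(ε) ≤ v r - (1 - r)
    rcases le_or_gt (1 - h) r with hc | hc
    · have := hv0 r
      rw [hh_def] at hc
      linarith
    · -- r + h < 1
      have hrh1 : r + h < 1 := by linarith
      have havg : ∫ s in Set.Ioc r (r+h), v s ≤ h * v r := by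
        have := setIntegral_Ioc_le_antitone hv (by linarith : r ≤ r + h)
        simpa using this
      have hsum : ∫ s in Set.Ioc 0 (r+h), v s =
          (∫ s in Set.Ioc 0 r, v s) + ∫ s in Set.Ioc r (r+h), v s :=
        setIntegral_Ioc_add hv hr0.le (by linarith)
      have hVrh : ((r+h) - (r+h) ^ 2 / 2) - (∫ s in Set.Ioc 0 (r+h), v s) ≤ ε ^ 2 / 8 :=
        hG (r+h) (by linarith) (by linarith)
      have hVr : ∫ s in Set.Ioc 0 r, v s ≤ r - r ^ 2 / 2 := hle r hr0 hr1.le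
      have hεh : ε ^ 2 / 8 = h * (ε / 4) := by rw [hh_def]; ring
      nlinarith [hh0, havg, hsum, hVrh, hVr]
  · -- upper bound : v r - (1 - r) ≤ ε
    rcases le_or_gt r h with hc | hc
    · have havg : r * v r ≤ ∫ s in Set.Ioc 0 r, v s := by
        have := le_setIntegral_Ioc_antitone hv hr0.le
        simpa using this
      have hVr : ∫ s in Set.Ioc 0 r, v s ≤ r - r ^ 2 / 2 := hle r hr0 hr1.le
      nlinarith [sq_nonneg r, hr0, hε]
    · have hrh0 : 0 < r - h := by linarith
      have havg : h * v r ≤ ∫ s in Set.Ioc (r-h) r, v s := by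
        have := le_setIntegral_Ioc_antitone hv (by linarith : r - h ≤ r)
        simpa using this
      have hsum : ∫ s in Set.Ioc 0 r, v s =
          (∫ s in Set.Ioc 0 (r-h), v s) + ∫ s in Set.Ioc (r-h) r, v s :=
        setIntegral_Ioc_add hv hrh0.le (by linarith)
      have hVrh : ((r-h) - (r-h) ^ 2 / 2) - (∫ s in Set.Ioc 0 (r-h), v s) ≤ ε ^ 2 / 8 :=
        hG (r-h) hrh0 (by linarith)
      have hVr : ∫ s in Set.Ioc 0 r, v s ≤ r - r ^ 2 / 2 := hle r hr0 hr1.le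
      nlinarith [hh0, havg, hsum, hVrh, hVr]

end Unif

section Helpers

lemma eLpNorm_x17_eq_one : (eLpNorm x17 ⊤ (muI 1)).toReal = 1 := by
  have hub : eLpNorm x17 ⊤ (muI 1) ≤ ENNReal.ofReal 1 := by
    rw [eLpNorm_exponent_top]
    exact eLpNormEssSup_le_of_ae_bound (C := 1)
      (by filter_upwards [x17_ae_bound] with s hs; rwa [Real.norm_eq_abs])
  have hlb : ENNReal.ofReal 1 ≤ eLpNorm x17 ⊤ (muI 1) := by
    rw [eLpNorm_exponent_top]
    by_contra hcon
    push_neg at hcon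
    set K := eLpNormEssSup x17 (muI 1) with hK
    have hKne : K ≠ ∞ := (lt_of_lt_of_le hcon le_top).ne
    have hKlt : K.toReal < 1 := by
      have h := (ENNReal.toReal_lt_toReal hKne (by norm_num : (ENNReal.ofReal 1) ≠ ∞)).2 hcon
      rwa [ENNReal.toReal_ofReal (by norm_num : (0:ℝ) ≤ 1)] at h
    have hK0 : (0:ℝ) ≤ K.toReal := ENNReal.toReal_nonneg
    have hae : ∀ᵐ s ∂(muI 1), |x17 s| ≤ K.toReal := by
      filter_upwards [ae_le_eLpNormEssSup (f := x17) (μ := muI 1)] with s hs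
      have := ENNReal.toReal_mono hKne hs
      simpa [coe_nnnorm, Real.norm_eq_abs] using this
    have h0 : distr 1 x17 (K.toReal) = 0 := distr_zero_of_ae hae le_rfl
    rw [distr_x17_lt hK0 hKlt] at h0
    have hpos : (0:ℝ) < 1 - K.toReal := by linarith
    exact absurd h0 (ne_of_gt (ENNReal.ofReal_pos.2 hpos))
  have heq : eLpNorm x17 ⊤ (muI 1) = ENNReal.ofReal 1 := le_antisymm hub hlb
  rw [heq, ENNReal.toReal_ofReal (by norm_num : (0:ℝ) ≤ 1)]

lemma hlp_Vle {u : ℝ → ℝ} (hu : HLP 1 u x17) {t : ℝ} (ht0 : 0 < t) (ht1 : t ≤ 1) :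
    ∫ s in Set.Ioc 0 t, rearr 1 u s ≤ t - t ^ 2 / 2 := by
  have h := hu t ht0
  simp only [maxf] at h
  rw [integral_rearr_x17 ht0 ht1] at h
  have h2 := mul_le_mul_of_nonneg_right h ht0.le
  rwa [div_mul_cancel₀ _ (ne_of_gt ht0), div_mul_cancel₀ _ (ne_of_gt ht0)] at h2

lemma v_le_half {u : ℝ → ℝ} {M : ℝ} (hM : 0 < M) (hae : ∀ᵐ s ∂(muI 1), |u s| ≤ M)
    (hu : HLP 1 u x17) {t : ℝ} (ht0 : 0 < t) (ht1 : t ≤ 1) :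
    rearr 1 u t ≤ 1 - t / 2 := by
  have hanti := rearr_anti hM hae
  have h1 : (t - 0) * rearr 1 u t ≤ ∫ s in Set.Ioc 0 t, rearr 1 u s :=
    le_setIntegral_Ioc_antitone hanti ht0.le
  have h2 := hlp_Vle hu ht0 ht1
  nlinarith [h1, h2, ht0]

lemma v_le_one {u : ℝ → ℝ} {M : ℝ} (hM : 0 < M) (hae : ∀ᵐ s ∂(muI 1), |u s| ≤ M)
    (hu : HLP 1 u x17) {t : ℝ} (ht0 : 0 < t) : rearr 1 u t ≤ 1 := by
  rcases le_or_gt t 1 with h | h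
  · linarith [v_le_half hM hae hu ht0 h, ht0]
  · calc rearr 1 u t ≤ rearr 1 u 1 := rearr_anti hM hae h.le
      _ ≤ 1 - 1/2 := v_le_half hM hae hu one_pos le_rfl
      _ ≤ 1 := by norm_num

lemma eLpNorm_le_one_of_hlp {u : ℝ → ℝ} {M : ℝ} (hM : 0 < M)
    (hae : ∀ᵐ s ∂(muI 1), |u s| ≤ M) (hu : HLP 1 u x17) :
    (eLpNorm u ⊤ (muI 1)).toReal ≤ 1 := by
  have hd : distr 1 u 1 = 0 := by
    apply le_antisymm _ zero_le
    apply ENNReal.le_of_forall_pos_le_add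
    intro ε hε _
    have hε' : (0:ℝ) < (ε:ℝ) := hε
    set t : ℝ := min (ε:ℝ) 1 with ht_def
    have ht0 : 0 < t := lt_min hε' one_pos
    have ht1 : t ≤ 1 := min_le_right _ _
    have hlt : rearr 1 u t < 1 := by
      have := v_le_half hM hae hu ht0 ht1
      linarith
    obtain ⟨lam, hlam, hlamlt⟩ := exists_lt_of_csInf_lt (rearr_set_nonempty hM hae t) hlt
    calc distr 1 u 1 ≤ distr 1 u lam := distr_anti 1 u hlamlt.le
      _ ≤ ENNReal.ofReal t := hlam.2
      _ ≤ ENNReal.ofReal (ε:ℝ) := ENNReal.ofReal_le_ofReal (min_le_left _ _)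
      _ = (ε : ℝ≥0∞) := ENNReal.ofReal_coe_nnreal
      _ = 0 + ε := (zero_add _).symm
  have hae1 : ∀ᵐ s ∂(muI 1), |u s| ≤ 1 := by
    rw [ae_iff]
    have hset : {s : ℝ | ¬ |u s| ≤ 1} = {s : ℝ | 1 < |u s|} := by
      ext s; simp [not_le]
    rw [hset]
    exact hd
  have : eLpNorm u ⊤ (muI 1) ≤ ENNReal.ofReal 1 := by
    rw [eLpNorm_exponent_top]
    exact eLpNormEssSup_le_of_ae_bound (C := 1)
      (by filter_upwards [hae1] with s hs; rwa [Real.norm_eq_abs])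
  exact ENNReal.toReal_le_of_le_ofReal (by norm_num) this

lemma lorN_eq_D {ψ ψ' : ℝ → ℝ} (hderiv : ∀ t ∈ Set.Ioi (0:ℝ), HasDerivAt ψ (ψ' t) t)
    (x : ℝ → ℝ) :
    lorN ψ' x = ∫ t in Set.Ioo (0:ℝ) 1, rearr 1 x t * deriv ψ t := by
  rw [lorN]
  apply setIntegral_congr_fun measurableSet_Ioo
  intro t ht
  simp only
  rw [psi'_eq_deriv hderiv t ht.1]

lemma muI_ae_Ioo : ∀ᵐ s ∂(muI 1), s ∈ Set.Ioo (0:ℝ) 1 := by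
  have h0 : (muI 1) {(0:ℝ)} = 0 := by
    rw [muI_one]
    apply le_antisymm _ zero_le
    calc (volume.restrict (Set.Ico (0:ℝ) 1)) {(0:ℝ)} ≤ volume {(0:ℝ)} :=
          Measure.restrict_le_self _
      _ = 0 := Real.volume_singleton
  have h1 : ∀ᵐ s ∂(muI 1), s ≠ 0 := by
    rw [ae_iff]
    have : {s : ℝ | ¬ s ≠ 0} = {(0:ℝ)} := by ext s; simp
    rw [this]
    exact h0
  have h2 : ∀ᵐ s ∂(muI 1), s ∈ Set.Ico (0:ℝ) 1 := by
    rw [muI_one]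
    exact ae_restrict_mem measurableSet_Ico
  filter_upwards [h1, h2] with s hs1 hs2
  exact ⟨lt_of_le_of_ne hs2.1 (Ne.symm hs1), hs2.2⟩

end Helpers

section EN17Bound

lemma rearr_mul_D_integrable {ψ ψ' : ℝ → ℝ}
    (hconc : StrictConcaveOn ℝ (Set.Ici (0 : ℝ)) ψ)
    (hmono : StrictMonoOn ψ (Set.Ici (0 : ℝ)))
    (hzero : ψ 0 = 0)
    (hderiv : ∀ t ∈ Set.Ioi (0:ℝ), HasDerivAt ψ (ψ' t) t)
    {f : ℝ → ℝ} {M : ℝ} (hM : 0 < M) (hae : ∀ᵐ s ∂(muI 1), |f s| ≤ M) :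
    MeasureTheory.IntegrableOn (fun s => rearr 1 f s * deriv ψ s) (Set.Ioo 0 1) volume := by
  have hDint := derivPsi_integrableOn hconc hmono hzero hderiv
  refine Integrable.mono' (g := fun s => M * deriv ψ s) (hDint.const_mul M)
    (((rearr_measurable hM hae).mul (measurable_deriv ψ)).aestronglyMeasurable) ?_
  refine (ae_restrict_iff' measurableSet_Ioo).2 (ae_of_all _ fun s hs => ?_)
  have hD := (derivPsi_pos hconc hmono hderiv s hs.1).le
  rw [Real.norm_eq_abs, abs_mul, abs_of_nonneg (rearr_nonneg 1 f s), abs_of_nonneg hD]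
  exact mul_le_mul_of_nonneg_right (rearr_le_of_ae_bound hM hae s) hD

lemma EN17_small {ψ ψ' : ℝ → ℝ}
    (hconc : StrictConcaveOn ℝ (Set.Ici (0 : ℝ)) ψ)
    (hmono : StrictMonoOn ψ (Set.Ici (0 : ℝ)))
    (hzero : ψ 0 = 0)
    (hderiv : ∀ t ∈ Set.Ioi (0:ℝ), HasDerivAt ψ (ψ' t) t)
    {f : ℝ → ℝ} {ε' : ℝ} (hε' : 0 < ε')
    (hfb : ∀ s ∈ Set.Ioo (0:ℝ) 1, |f s| ≤ ε') :
    0 ≤ EN17 ψ' f ∧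
      EN17 ψ' f ≤ ε' * (1 + ∫ s in Set.Ioo (0:ℝ) 1, deriv ψ s) := by
  have hae : ∀ᵐ s ∂(muI 1), |f s| ≤ ε' := by
    filter_upwards [muI_ae_Ioo] with s hs
    exact hfb s hs
  have hLp_le : (eLpNorm f ⊤ (muI 1)).toReal ≤ ε' := by
    apply ENNReal.toReal_le_of_le_ofReal hε'.le
    rw [eLpNorm_exponent_top]
    exact eLpNormEssSup_le_of_ae_bound
      (by filter_upwards [hae] with s hs; rwa [Real.norm_eq_abs])
  have hrearr_le : ∀ t, rearr 1 f t ≤ ε' := rearr_le_of_ae_bound hε' hae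
  have hrearr_nn : ∀ t, 0 ≤ rearr 1 f t := rearr_nonneg 1 f
  have hDpos : ∀ s ∈ Set.Ioo (0:ℝ) 1, 0 ≤ deriv ψ s :=
    fun s hs => (derivPsi_pos hconc hmono hderiv s hs.1).le
  have hlor : lorN ψ' f = ∫ t in Set.Ioo (0:ℝ) 1, rearr 1 f t * deriv ψ t :=
    lorN_eq_D hderiv f
  have hlor_nn : 0 ≤ lorN ψ' f := by
    rw [hlor]
    exact setIntegral_nonneg measurableSet_Ioo
      fun s hs => mul_nonneg (hrearr_nn s) (hDpos s hs)
  have hDint := derivPsi_integrableOn hconc hmono hzero hderiv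
  have hlor_le : lorN ψ' f ≤ ε' * ∫ s in Set.Ioo (0:ℝ) 1, deriv ψ s := by
    rw [hlor, ← integral_const_mul]
    refine setIntegral_mono_on (rearr_mul_D_integrable hconc hmono hzero hderiv hε' hae)
      (hDint.const_mul ε') measurableSet_Ioo ?_
    intro s hs
    exact mul_le_mul_of_nonneg_right (hrearr_le s) (hDpos s hs)
  constructor
  · exact add_nonneg hlor_nn ENNReal.toReal_nonneg
  · calc EN17 ψ' f = lorN ψ' f + (eLpNorm f ⊤ (muI 1)).toReal := rfl
      _ ≤ ε' * (∫ s in Set.Ioo (0:ℝ) 1, deriv ψ s) + ε' := add_le_add hlor_le hLp_le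
      _ = ε' * (1 + ∫ s in Set.Ioo (0:ℝ) 1, deriv ψ s) := by ring

end EN17Bound

/-- For `E = Λ_{1,ψ'} ∩ L^∞` on `[0,1]` with norm
`‖·‖_{Λ_{1,ψ'}} + ‖·‖_{L^∞}` (where `ψ` is strictly concave, increasing, `ψ(0) = ψ(0⁺) = 0`
and `ψ(∞) = ∞`), the function `x(t) = (1 − t)χ_{[0,1]}(t)` is an `LLUKM` point of `E`
but not a point of order continuity. -/
theorem lorentz_inter_linf_llukm_not_oc (ψ ψ' : ℝ → ℝ)
    (hconc : StrictConcaveOn ℝ (Set.Ici (0 : ℝ)) ψ)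
    (hmono : StrictMonoOn ψ (Set.Ici (0 : ℝ)))
    (hzero : ψ 0 = 0)
    (hzero' : Tendsto ψ (𝓝[>] (0 : ℝ)) (𝓝 0))
    (hinfty : Tendsto ψ atTop atTop)
    (hderiv : ∀ t ∈ Set.Ioi (0 : ℝ), HasDerivAt ψ (ψ' t) t) :
    (∀ u : ℕ → ℝ → ℝ, (∀ n, Mem17 ψ' (u n)) → (∀ n, HLP 1 (u n) x17) →
        Tendsto (fun n => EN17 ψ' (u n)) atTop (𝓝 (EN17 ψ' x17)) →
        Tendsto (fun n => EN17 ψ' (rearr 1 (u n) - rearr 1 x17)) atTop (𝓝 0)) ∧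
    ¬ (∀ u : ℕ → ℝ → ℝ, (∀ n, Mem17 ψ' (u n)) →
        (∀ n, ∀ᵐ s ∂(muI 1), 0 ≤ u n s ∧ u n s ≤ |x17 s|) →
        (∀ᵐ s ∂(muI 1), Tendsto (fun n => u n s) atTop (𝓝 0)) →
        Tendsto (fun n => EN17 ψ' (u n)) atTop (𝓝 0)) := by
  have hDm : Measurable (deriv ψ) := measurable_deriv ψ
  have hDanti := derivPsi_anti hconc hderiv
  have hDstrict := derivPsi_strictAnti hconc hderiv
  have hD0 := derivPsi_pos hconc hmono hderiv
  have hDint := derivPsi_integrableOn hconc hmono hzero hderiv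
  have hx_anti : Antitone (rearr 1 x17) := rearr_anti one_pos x17_ae_bound
  have hx_meas : Measurable (rearr 1 x17) := hx_anti.measurable
  have hx_int : MeasureTheory.IntegrableOn (fun s => rearr 1 x17 s * deriv ψ s)
      (Set.Ioo 0 1) volume :=
    rearr_mul_D_integrable hconc hmono hzero hderiv one_pos x17_ae_bound
  set C : ℝ := ∫ s in Set.Ioo (0:ℝ) 1, deriv ψ s with hC_def
  set A : ℝ := ∫ s in Set.Ioo (0:ℝ) 1, rearr 1 x17 s * deriv ψ s with hA_def
  have hlorx : lorN ψ' x17 = A := lorN_eq_D hderiv x17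
  have hEN17x : EN17 ψ' x17 = A + 1 := by
    rw [EN17, hlorx, eLpNorm_x17_eq_one]
  constructor
  · intro u hMem hHLP hNorm
    choose M hM0 hMae using fun n => exists_ae_bound (hMem n).2.2
    have hv_anti : ∀ n, Antitone (rearr 1 (u n)) := fun n => rearr_anti (hM0 n) (hMae n)
    have hv_nn : ∀ n, ∀ s, 0 ≤ rearr 1 (u n) s := fun n => rearr_nonneg 1 (u n)
    have hv_le1 : ∀ n, ∀ t : ℝ, 0 < t → rearr 1 (u n) t ≤ 1 :=
      fun n t ht => v_le_one (hM0 n) (hMae n) (hHLP n) ht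
    have hVle : ∀ n, ∀ t : ℝ, 0 < t → t ≤ 1 →
        ∫ s in Set.Ioc 0 t, rearr 1 (u n) s ≤ t - t ^ 2 / 2 :=
      fun n t ht0 ht1 => hlp_Vle (hHLP n) ht0 ht1
    have hu_int : ∀ n, MeasureTheory.IntegrableOn (fun s => rearr 1 (u n) s * deriv ψ s)
        (Set.Ioo 0 1) volume :=
      fun n => rearr_mul_D_integrable hconc hmono hzero hderiv (hM0 n) (hMae n)
    set a : ℕ → ℝ := fun n => ∫ s in Set.Ioo (0:ℝ) 1, rearr 1 (u n) s * deriv ψ s with ha_def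
    have hlor_u : ∀ n, lorN ψ' (u n) = a n := fun n => lorN_eq_D hderiv (u n)
    set G : ℕ → ℝ → ℝ := fun n t =>
      (∫ s in Set.Ioc 0 t, rearr 1 x17 s) - ∫ s in Set.Ioc 0 t, rearr 1 (u n) s with hG_def
    have hGg : ∀ n, ∀ t : ℝ, G n t = ∫ s in Set.Ioc 0 t, (rearr 1 x17 s - rearr 1 (u n) s) := by
      intro n t
      rw [hG_def]
      exact (integral_sub (antitone_integrableOn hx_anti 0 t)
        (antitone_integrableOn (hv_anti n) 0 t)).symm
    have hG_nonneg : ∀ n, ∀ c ∈ Set.Icc (0:ℝ) 1, 0 ≤ G n c := by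
      intro n c hc
      rcases eq_or_lt_of_le hc.1 with heq | hc0
      · rw [hG_def, ← heq]
        simp [Set.Ioc_self]
      · rw [hG_def]
        simp only
        have h1 := hVle n c hc0 hc.2
        have h2 := integral_rearr_x17 hc0 hc.2
        linarith
    have hg_meas : ∀ n, Measurable (fun s => rearr 1 x17 s - rearr 1 (u n) s) :=
      fun n => hx_meas.sub (hv_anti n).measurable
    have hgbd : ∀ n, ∀ s ∈ Set.Ioc (0:ℝ) 1, |rearr 1 x17 s - rearr 1 (u n) s| ≤ 2 := by
      intro n s hs
      rw [abs_le]
      constructor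
      · have h1 := hv_le1 n s hs.1
        have h2 := rearr_nonneg 1 x17 s
        linarith
      · have h1 := rearr_x17_le_one s
        have h2 := hv_nn n s
        linarith
    have hgD_int : ∀ n, MeasureTheory.IntegrableOn
        (fun s => (rearr 1 x17 s - rearr 1 (u n) s) * deriv ψ s) (Set.Ioo 0 1) volume := by
      intro n
      have hsub : MeasureTheory.IntegrableOn
          (fun s => rearr 1 x17 s * deriv ψ s - rearr 1 (u n) s * deriv ψ s)
          (Set.Ioo 0 1) volume := hx_int.sub (hu_int n)
      refine hsub.congr_fun (fun s _ => ?_) measurableSet_Ioo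
      ring
    have hmaster := fun n => master_hardy (hg_meas n) hDm hDanti hD0 (hgbd n) hDint
      (by intro c hc; rw [← hGg n c]; exact hG_nonneg n c hc)
    have hEg : ∀ n, ∫ s in Set.Ioo (0:ℝ) 1,
        (rearr 1 x17 s - rearr 1 (u n) s) * deriv ψ s = A - a n := by
      intro n
      have heq : (fun s => (rearr 1 x17 s - rearr 1 (u n) s) * deriv ψ s)
          = fun s => rearr 1 x17 s * deriv ψ s - rearr 1 (u n) s * deriv ψ s := by
        funext s; ring
      rw [heq, integral_sub hx_int (hu_int n)]
    have hb_le : ∀ n, (eLpNorm (u n) ⊤ (muI 1)).toReal ≤ 1 :=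
      fun n => eLpNorm_le_one_of_hlp (hM0 n) (hMae n) (hHLP n)
    have ha_le : ∀ n, a n ≤ A := by
      intro n
      have h := (hmaster n).1
      rw [hEg n] at h
      linarith
    have hEN17u : ∀ n, EN17 ψ' (u n) = a n + (eLpNorm (u n) ⊤ (muI 1)).toReal :=
      fun n => by rw [EN17, hlor_u n]
    have htend : Tendsto (fun n => A - a n) atTop (𝓝 0) := by
      have h1 : Tendsto (fun n => (A + 1) - EN17 ψ' (u n)) atTop (𝓝 0) := by
        have h2 := (tendsto_const_nhds (x := A + 1) (f := atTop)).sub hNorm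
        rwa [hEN17x, sub_self] at h2
      refine tendsto_of_tendsto_of_tendsto_of_le_of_le tendsto_const_nhds h1
        (fun n => sub_nonneg.2 (ha_le n)) (fun n => ?_)
      rw [hEN17u n]
      have := hb_le n
      linarith
    have hpt : ∀ t ∈ Set.Ioo (0:ℝ) 1, ∀ ε > 0, ∀ᶠ n in atTop, G n t ≤ ε := by
      intro t ht ε hε
      set δ : ℝ := min (ε/4) ((1-t)/2) with hδ_def
      have hδ0 : 0 < δ := lt_min (by linarith) (by linarith [ht.2])
      have htδ : t + δ < 1 := by
        have h := min_le_right (ε/4) ((1-t)/2)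
        rw [← hδ_def] at h
        linarith [ht.2]
      have hδε : 2*δ ≤ ε/2 := by
        have h := min_le_left (ε/4) ((1-t)/2)
        rw [← hδ_def] at h
        linarith
      have hc : 0 < deriv ψ t - deriv ψ (t + δ) := by
        have h := hDstrict ht.1 (show t + δ ∈ Set.Ioi (0:ℝ) from by
          simp only [Set.mem_Ioi]; linarith [ht.1]) (by linarith)
        linarith
      have hev : ∀ᶠ n in atTop, A - a n < (deriv ψ t - deriv ψ (t+δ)) * (ε/2) :=
        htend.eventually_lt_const (by positivity)
      filter_upwards [hev] with n hn
      have hq := (hmaster n).2 t δ ht.1 hδ0 htδ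
      rw [hEg n, ← hGg n t] at hq
      nlinarith [hq, hn, hc, hδε, mul_nonneg (by linarith : (0:ℝ) ≤ ε/2 - 2*δ) hc.le]
    rw [Metric.tendsto_atTop]
    intro ε hε
    have hC0 : 0 ≤ C := setIntegral_nonneg measurableSet_Ioo fun s hs => (hD0 s hs.1).le
    set ε' : ℝ := min 1 (ε / (2*(1+C))) with hε'_def
    have hε'0 : 0 < ε' := lt_min one_pos (div_pos hε (by linarith))
    have hε'1 : ε' ≤ 1 := min_le_left _ _
    have hG0 : ∀ n, G n 0 = 0 := by
      intro n
      rw [hG_def]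
      simp [Set.Ioc_self]
    have hLip : ∀ n, ∀ p q : ℝ, 0 ≤ p → p ≤ q → q ≤ 1 → G n q - G n p ≤ 2*(q - p) := by
      intro n p q hp hpq hq1
      have hxs : ∫ s in Set.Ioc 0 q, rearr 1 x17 s =
          (∫ s in Set.Ioc 0 p, rearr 1 x17 s) + ∫ s in Set.Ioc p q, rearr 1 x17 s :=
        setIntegral_Ioc_add hx_anti hp hpq
      have hvs : ∫ s in Set.Ioc 0 q, rearr 1 (u n) s =
          (∫ s in Set.Ioc 0 p, rearr 1 (u n) s) + ∫ s in Set.Ioc p q, rearr 1 (u n) s :=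
        setIntegral_Ioc_add (hv_anti n) hp hpq
      have hxb : ∫ s in Set.Ioc p q, rearr 1 x17 s ≤ (q - p) * 1 := by
        calc ∫ s in Set.Ioc p q, rearr 1 x17 s ≤ (q - p) * rearr 1 x17 p :=
              setIntegral_Ioc_le_antitone hx_anti hpq
          _ ≤ (q - p) * 1 := mul_le_mul_of_nonneg_left (rearr_x17_le_one p) (by linarith)
      have hvb : 0 ≤ ∫ s in Set.Ioc p q, rearr 1 (u n) s :=
        setIntegral_nonneg measurableSet_Ioc fun s _ => hv_nn n s
      rw [hG_def]
      simp only
      linarith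
    have hunif := unif_G hG0 hLip hpt (show (0:ℝ) < ε'^2/8 by positivity)
    rw [Filter.eventually_atTop] at hunif
    obtain ⟨N, hN⟩ := hunif
    refine ⟨N, fun n hn => ?_⟩
    have hsmall : ∀ r ∈ Set.Ioo (0:ℝ) 1, |rearr 1 (u n) r - (1 - r)| ≤ ε' := by
      apply unif_v (hv_anti n) (hv_nn n) (fun t ht0 ht1 => hVle n t ht0 ht1) hε'0 hε'1
      intro t ht0 ht1
      have h1 := hN n hn t ⟨ht0.le, ht1⟩
      rw [hG_def] at h1
      simp only at h1
      have h2 := integral_rearr_x17 ht0 ht1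
      linarith
    have hfb : ∀ s ∈ Set.Ioo (0:ℝ) 1, |(rearr 1 (u n) - rearr 1 x17) s| ≤ ε' := by
      intro s hs
      rw [Pi.sub_apply, rearr_x17_eq hs.1 hs.2]
      exact hsmall s hs
    obtain ⟨hEN_nn, hEN_le⟩ := EN17_small hconc hmono hzero hderiv hε'0 hfb
    rw [Real.dist_eq, sub_zero, abs_of_nonneg hEN_nn]
    have h1C : (0:ℝ) < 1 + C := by linarith
    calc EN17 ψ' (rearr 1 (u n) - rearr 1 x17) ≤ ε' * (1 + C) := hEN_le
      _ ≤ (ε / (2*(1+C))) * (1 + C) :=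
          mul_le_mul_of_nonneg_right (min_le_right _ _) h1C.le
      _ = ε/2 := by field_simp
      _ < ε := by linarith
  · intro hOC
    set u : ℕ → ℝ → ℝ :=
      fun n => (Set.Ioo (0:ℝ) (1/((n:ℝ)+2))).indicator (fun _ => (1/2 : ℝ)) with hu_def
    have han : ∀ n : ℕ, (0:ℝ) < 1/((n:ℝ)+2) := by intro n; positivity
    have han2 : ∀ n : ℕ, 1/((n:ℝ)+2) ≤ 1/2 := by
      intro n
      apply one_div_le_one_div_of_le (by norm_num)
      have : (0:ℝ) ≤ (n:ℝ) := Nat.cast_nonneg n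
      linarith
    have hval : ∀ n s, u n s = 0 ∨ u n s = 1/2 := by
      intro n s
      simp only [hu_def]
      by_cases h : s ∈ Set.Ioo (0:ℝ) (1/((n:ℝ)+2))
      · right; rw [Set.indicator_of_mem h]
      · left; rw [Set.indicator_of_notMem h]
    have hbd : ∀ n, ∀ᵐ s ∂(muI 1), |u n s| ≤ 1/2 := by
      intro n
      refine ae_of_all _ fun s => ?_
      rcases hval n s with h | h
      · rw [h]; norm_num
      · rw [h, abs_of_nonneg (by norm_num : (0:ℝ) ≤ 1/2)]
    have hmeas : ∀ n, Measurable (u n) := by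
      intro n
      simp only [hu_def]
      exact measurable_const.indicator measurableSet_Ioo
    have hMem : ∀ n, Mem17 ψ' (u n) := by
      intro n
      refine ⟨(hmeas n).aemeasurable, ?_, ?_⟩
      · have hD : MeasureTheory.IntegrableOn (fun t => rearr 1 (u n) t * deriv ψ t)
            (Set.Ioo 0 1) volume :=
          rearr_mul_D_integrable hconc hmono hzero hderiv (by norm_num) (hbd n)
        refine hD.congr_fun (fun t ht => ?_) measurableSet_Ioo
        simp only [psi'_eq_deriv hderiv t ht.1]
      · exact memLp_top_of_bound (hmeas n).aestronglyMeasurable (1/2)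
          (by filter_upwards [hbd n] with s hs; rwa [Real.norm_eq_abs])
    have hdom : ∀ n, ∀ᵐ s ∂(muI 1), 0 ≤ u n s ∧ u n s ≤ |x17 s| := by
      intro n
      filter_upwards [muI_ae_Ioo] with s hs
      constructor
      · rcases hval n s with h | h <;> rw [h] <;> norm_num
      · rw [x17_of_mem hs.1.le hs.2.le,
          abs_of_nonneg (by linarith [hs.2] : (0:ℝ) ≤ 1 - s)]
        simp only [hu_def]
        by_cases h : s ∈ Set.Ioo (0:ℝ) (1/((n:ℝ)+2))
        · rw [Set.indicator_of_mem h]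
          have h2 := h.2
          have h3 := han2 n
          linarith
        · rw [Set.indicator_of_notMem h]
          linarith [hs.2]
    have htend0 : ∀ᵐ s ∂(muI 1), Tendsto (fun n => u n s) atTop (𝓝 0) := by
      refine ae_of_all _ fun s => ?_
      rcases le_or_gt s 0 with hs | hs
      · have hz : ∀ n, u n s = 0 := by
          intro n
          simp only [hu_def]
          exact Set.indicator_of_notMem (fun h => absurd h.1 (not_lt.2 hs)) _
        simp only [hz]
        exact tendsto_const_nhds
      · obtain ⟨N, hN⟩ := exists_nat_gt (1/s)
        apply tendsto_atTop_of_eventually_const (i₀ := N)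
        intro n hn
        simp only [hu_def]
        apply Set.indicator_of_notMem
        intro h
        have h2 : 1/((n:ℝ)+2) ≤ s := by
          rw [div_le_iff₀ (by positivity)]
          have hNn : (N:ℝ) ≤ (n:ℝ) := Nat.cast_le.2 hn
          rw [div_lt_iff₀ hs] at hN
          nlinarith
        linarith [h.2]
    have htendEN := hOC u hMem hdom htend0
    have hge : ∀ n, (1:ℝ)/2 ≤ EN17 ψ' (u n) := by
      intro n
      have hlor_nn : 0 ≤ lorN ψ' (u n) := by
        rw [lorN_eq_D hderiv]
        exact setIntegral_nonneg measurableSet_Ioo fun s hs =>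
          mul_nonneg (rearr_nonneg 1 (u n) s) (hD0 s hs.1).le
      have hLp : (1:ℝ)/2 ≤ (eLpNorm (u n) ⊤ (muI 1)).toReal := by
        by_contra hcon
        push_neg at hcon
        set K := eLpNormEssSup (u n) (muI 1) with hK
        have hKub : K ≤ ENNReal.ofReal (1/2) :=
          eLpNormEssSup_le_of_ae_bound
            (by filter_upwards [hbd n] with s hs; rwa [Real.norm_eq_abs])
        have hKne : K ≠ ∞ := (lt_of_le_of_lt hKub ENNReal.ofReal_lt_top).ne
        have hKlt : K.toReal < 1/2 := by
          rw [hK, ← eLpNorm_exponent_top]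
          exact hcon
        have hae2 : ∀ᵐ s ∂(muI 1), |u n s| ≤ K.toReal := by
          filter_upwards [ae_le_eLpNormEssSup (f := u n) (μ := muI 1)] with s hs
          have := ENNReal.toReal_mono hKne hs
          simpa [coe_nnnorm, Real.norm_eq_abs] using this
        have hmuIoo : (muI 1) (Set.Ioo (0:ℝ) (1/((n:ℝ)+2))) =
            ENNReal.ofReal (1/((n:ℝ)+2)) := by
          rw [muI_one, Measure.restrict_apply' measurableSet_Ico]
          have hint : Set.Ioo (0:ℝ) (1/((n:ℝ)+2)) ∩ Set.Ico 0 1 =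
              Set.Ioo (0:ℝ) (1/((n:ℝ)+2)) := by
            apply Set.inter_eq_left.2
            intro s hs
            refine ⟨hs.1.le, lt_of_lt_of_le hs.2 ?_⟩
            exact le_trans (han2 n) (by norm_num)
          rw [hint, Real.volume_Ioo, sub_zero]
        have hpos : 0 < (muI 1) {s : ℝ | K.toReal < |u n s|} := by
          have hsub2 : Set.Ioo (0:ℝ) (1/((n:ℝ)+2)) ⊆ {s : ℝ | K.toReal < |u n s|} := by
            intro s hs
            have hus : u n s = 1/2 := by
              simp only [hu_def]
              exact Set.indicator_of_mem hs _
            simp only [Set.mem_setOf_eq, hus]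
            rw [abs_of_nonneg (by norm_num : (0:ℝ) ≤ 1/2)]
            exact hKlt
          calc (0:ℝ≥0∞) < ENNReal.ofReal (1/((n:ℝ)+2)) := ENNReal.ofReal_pos.2 (han n)
            _ = (muI 1) (Set.Ioo (0:ℝ) (1/((n:ℝ)+2))) := hmuIoo.symm
            _ ≤ (muI 1) {s | K.toReal < |u n s|} := measure_mono hsub2
        have h0 : (muI 1) {s : ℝ | K.toReal < |u n s|} = 0 := by
          rw [ae_iff] at hae2
          have hsetEq : {s : ℝ | ¬ |u n s| ≤ K.toReal} = {s : ℝ | K.toReal < |u n s|} := by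
            ext s; simp [not_le]
          rw [← hsetEq]
          exact hae2
        rw [h0] at hpos
        exact lt_irrefl _ hpos
      calc (1:ℝ)/2 ≤ (eLpNorm (u n) ⊤ (muI 1)).toReal := hLp
        _ ≤ EN17 ψ' (u n) := by rw [EN17]; linarith
    have hev := htendEN.eventually_lt_const (show (0:ℝ) < 1/2 by norm_num)
    obtain ⟨n, hn⟩ := hev.exists
    exact absurd (hge n) (not_le.2 hn)
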